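/- Fix k ≥ 2, n ≥ k. Let w_s = -z^k Σ_{r=0}^{s-1} ψ_{k,r} C(s-1,r) z^r. Then Σ_{s=1}^{n-k+1} C(n-s, k-1) · w_s = -Σ_{r=k}^{n} ψ_{k,r} · C(n,r) · z^r. -/
import Mathlib


open Finset

/-- `ψ_{k,r}`: 1 if `r ≡ 0 (mod k)`, -1 if `r ≡ 1 (mod k)`, 0 otherwise. -/
noncomputable def psi (k : ℕ) (r : ℤ) : ℂ :=
  if r % (k : ℤ) = 0 then 1 else if r % (k : ℤ) = 1 then -1 else 0

lemma hs (N t : ℕ) : ∑ j ∈ range N, j.choose t = N.choose (t+1) := by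
  induction N with
  | zero => simp
  | succ N ih => rw [Finset.sum_range_succ, ih, Nat.choose_succ_succ' N t, add_comm]

lemma key (t : ℕ) : ∀ (m r : ℕ),
    ∑ j ∈ range (m+1), j.choose r * (m - j).choose t = (m+1).choose (r+t+1) := by
  intro m
  induction m with
  | zero =>
    intro r
    rcases r with _ | r <;> rcases t with _ | t <;>
      simp [Nat.choose_eq_zero_of_lt]
  | succ m ih =>
    intro r
    rcases r with _ | r
    · simp only [Nat.choose_zero_right, one_mul]
      have h : ∑ x ∈ range (m+2), (m+1-x).choose t = ∑ x ∈ range (m+2), x.choose t := by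
        rw [← Finset.sum_range_reflect]
        refine Finset.sum_congr rfl fun x hx => ?_
        rw [Finset.mem_range] at hx; congr 1; omega
      rw [show (m + 1 + 1) = m + 2 from rfl, h, hs, Nat.zero_add]
    · rw [Finset.sum_range_succ' (fun j => j.choose (r+1) * (m + 1 - j).choose t) (m+1)]
      simp only [Nat.succ_sub_succ, Nat.choose_zero_succ, zero_mul, add_zero]
      have e : ∀ x ∈ range (m+1), (x+1).choose (r+1) * (m - x).choose t
          = x.choose r * (m-x).choose t + x.choose (r+1) * (m-x).choose t :=
        fun x _ => by rw [Nat.choose_succ_succ, add_mul]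
      rw [Finset.sum_congr rfl e, Finset.sum_add_distrib, ih r, ih (r+1),
        show r+1+t+1 = r+t+1+1 by ring]
      exact (Nat.choose_succ_succ' (m+1) (r+t+1)).symm

lemma key2 (n k : ℕ) (hk : 2 ≤ k) (hn : k ≤ n) (r : ℕ) :
    ∑ s ∈ Icc 1 (n - k + 1), (n - s).choose (k-1) * (s-1).choose r = n.choose (r + k) := by
  have h1 : ∑ s ∈ Icc 1 (n-k+1), (n - s).choose (k-1) * (s-1).choose r
      = ∑ s ∈ Icc 1 n, (n - s).choose (k-1) * (s-1).choose r := by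
    apply Finset.sum_subset (Finset.Icc_subset_Icc_right (by omega))
    intro s hs hns
    rw [Finset.mem_Icc] at hs hns
    rw [Nat.choose_eq_zero_of_lt (show n - s < k - 1 by omega), zero_mul]
  rw [h1, ← Finset.Ico_add_one_right_eq_Icc, Finset.sum_Ico_eq_sum_range]
  have h2 : ∀ i ∈ range (n + 1 - 1), (n - (1 + i)).choose (k-1) * (1 + i - 1).choose r
      = i.choose r * ((n-1) - i).choose (k-1) := by
    intro i _
    rw [show n - (1+i) = (n-1) - i by omega, show 1 + i - 1 = i by omega, mul_comm]
  rw [Finset.sum_congr rfl h2]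
  have h3 := key (k-1) (n-1) r
  rw [show n - 1 + 1 = n by omega, show r + (k-1) + 1 = r + k by omega] at h3
  rw [show n + 1 - 1 = n by omega, show n = n - 1 + 1 by omega] at *
  exact h3

lemma psi_add_k (k r : ℕ) (hk : 0 < k) : psi k ((r + k : ℕ) : ℤ) = psi k (r : ℤ) := by
  unfold psi
  push_cast
  rw [show ((r:ℤ) + (k:ℤ)) = (r:ℤ) + (k:ℤ) * 1 by ring, Int.add_mul_emod_self_left]

/-- Total Goulden–Jackson weight of the set of all streaks of length `k` over `{1,…,n}`. -/
theorem streak_total_weight (n k : ℕ) (hk : 2 ≤ k) (hn : k ≤ n) (z : ℂ) :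
    ∑ s ∈ Finset.Icc 1 (n - k + 1),
        ((n - s).choose (k - 1) : ℂ) *
          (-z ^ k * ∑ r ∈ Finset.range s, psi k r * ((s - 1).choose r : ℂ) * z ^ r) =
      -∑ r ∈ Finset.Icc k n, psi k r * (n.choose r : ℂ) * z ^ r := by
  have step1 : ∀ s ∈ Finset.Icc 1 (n - k + 1),
      ((n - s).choose (k - 1) : ℂ) *
          (-z ^ k * ∑ r ∈ Finset.range s, psi k r * ((s - 1).choose r : ℂ) * z ^ r)
      = ∑ r ∈ Finset.range (n+1),
          -(psi k r * (((n - s).choose (k-1) * (s-1).choose r : ℕ) : ℂ) * z ^ (r+k)) := by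
    intro s hs
    rw [Finset.mem_Icc] at hs
    have hsub : Finset.range s ⊆ Finset.range (n+1) := by
      apply Finset.range_subset_range.2; omega
    have e1 : ((n - s).choose (k - 1) : ℂ) *
          (-z ^ k * ∑ r ∈ Finset.range s, psi k r * ((s - 1).choose r : ℂ) * z ^ r)
        = ∑ r ∈ Finset.range s,
          -(psi k r * (((n - s).choose (k-1) * (s-1).choose r : ℕ) : ℂ) * z ^ (r+k)) := by
      rw [Finset.mul_sum, Finset.mul_sum]
      refine Finset.sum_congr rfl fun r _ => ?_
      push_cast
      ring
    rw [e1]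
    apply Finset.sum_subset hsub
    intro r hr hrs
    rw [Finset.mem_range, not_lt] at hrs
    rw [Nat.choose_eq_zero_of_lt (show s - 1 < r by omega)]
    simp
  rw [Finset.sum_congr rfl step1, Finset.sum_comm]
  have step2 : ∀ r ∈ Finset.range (n+1),
      ∑ s ∈ Finset.Icc 1 (n-k+1),
          -(psi k r * (((n - s).choose (k-1) * (s-1).choose r : ℕ) : ℂ) * z ^ (r+k))
      = -(psi k r * (n.choose (r+k) : ℂ) * z ^ (r+k)) := by
    intro r _
    rw [Finset.sum_neg_distrib]
    congr 1
    rw [← Finset.sum_mul, ← Finset.mul_sum, ← Nat.cast_sum, key2 n k hk hn r]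
  rw [Finset.sum_congr rfl step2, Finset.sum_neg_distrib, neg_inj]
  have hR : ∑ r ∈ Finset.Icc k n, psi k r * (n.choose r : ℂ) * z ^ r
      = ∑ i ∈ Finset.range (n+1), psi k (((k+i : ℕ)) : ℤ) * (n.choose (k+i) : ℂ) * z ^ (k+i) := by
    rw [Finset.sum_subset (Finset.Icc_subset_Icc_right (show n ≤ n + k by omega))
      (fun r hr hrn => by
        rw [Finset.mem_Icc] at hr hrn
        rw [Nat.choose_eq_zero_of_lt (show n < r by omega)]
        simp)]
    rw [← Finset.Ico_add_one_right_eq_Icc, Finset.sum_Ico_eq_sum_range,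
      show n + k + 1 - k = n + 1 by omega]
  rw [hR]
  refine Finset.sum_congr rfl fun r _ => ?_
  rw [show k + r = r + k from Nat.add_comm k r, psi_add_k k r (by omega)]
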